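/- Let p be a prime and s ≥ 3p - 2. For any integers a_1, ..., a_s and b_1, ..., b_s, there exists a nonempty subset J of {1, ..., s} with |J| ≤ p such that both ∑_{j ∈ J} a_j ≡ 0 (mod p) and ∑_{j ∈ J} b_j ≡ 0 (mod p). -/

import Mathlib

open MvPolynomial Finset

section helpers

variable {p : ℕ} [Fact p.Prime] {ι : Type} [Fintype ι] [DecidableEq ι]

noncomputable def olsonPoly (p : ℕ) (α : ι → ZMod p) : MvPolynomial ι (ZMod p) :=
  ∑ j, C (α j) * X j ^ (p - 1)

lemma olsonPoly_totalDegree (α : ι → ZMod p) :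
    (olsonPoly p α).totalDegree ≤ p - 1 := by
  refine (totalDegree_finset_sum _ _).trans ?_
  refine Finset.sup_le fun j _ => ?_
  refine (totalDegree_mul _ _).trans ?_
  have h1 : (C (α j) : MvPolynomial ι (ZMod p)).totalDegree = 0 := totalDegree_C _
  have h2 : ((X j : MvPolynomial ι (ZMod p)) ^ (p - 1)).totalDegree ≤ (p-1) * 1 := by
    refine (totalDegree_pow _ _).trans ?_
    simp [totalDegree_X]
  omega

lemma olsonPoly_eval (α : ι → ZMod p) (x : ι → ZMod p) :
    eval x (olsonPoly p α) = ∑ j ∈ univ.filter (fun j => x j ≠ 0), α j := by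
  have hp1 : p - 1 ≠ 0 := by
    have := (Fact.out : p.Prime).two_le; omega
  rw [olsonPoly, map_sum, Finset.sum_filter]
  refine Finset.sum_congr rfl fun j _ => ?_
  rw [eval_mul, eval_C, eval_pow, eval_X]
  by_cases h : x j = 0
  · simp [h, zero_pow hp1]
  · simp [h, ZMod.pow_card_sub_one_eq_one h]

end helpers

section lemAB

set_option linter.unusedSectionVars false

variable {p : ℕ} [Fact p.Prime] {ι : Type} [Fintype ι] [DecidableEq ι]

lemma lemA (hcard : 3 * (p - 1) < Fintype.card ι) (α β : ι → ZMod p) :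
    ∃ J : Finset ι, J.Nonempty ∧ (J.card : ZMod p) = 0 ∧
      ∑ j ∈ J, α j = 0 ∧ ∑ j ∈ J, β j = 0 := by
  set g : Fin 3 → ι → ZMod p := ![α, β, fun _ => 1] with hg
  set f : Fin 3 → MvPolynomial ι (ZMod p) := fun i => olsonPoly p (g i) with hf
  have hdeg : (∑ i, (f i).totalDegree) < Fintype.card ι := by
    have h : ∑ i, (f i).totalDegree ≤ (univ : Finset (Fin 3)).card • (p - 1) :=
      Finset.sum_le_card_nsmul _ _ _ (fun i _ => olsonPoly_totalDegree (g i))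
    simp only [Finset.card_univ, Fintype.card_fin, smul_eq_mul] at h
    omega
  have hdvd : p ∣ Fintype.card { x : ι → ZMod p // ∀ i, eval x (f i) = 0 } := by
    have h := char_dvd_card_solutions_of_fintype_sum_lt p hdeg
    convert h using 2
  have hzero : ∀ i, eval (0 : ι → ZMod p) (f i) = 0 := by
    intro i
    show eval (0 : ι → ZMod p) (olsonPoly p (g i)) = 0
    rw [olsonPoly_eval]
    simp
  have hcard2 : 1 < Fintype.card { x : ι → ZMod p // ∀ i, eval x (f i) = 0 } := by
    have hpos : 0 < Fintype.card { x : ι → ZMod p // ∀ i, eval x (f i) = 0 } :=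
      Fintype.card_pos_iff.mpr ⟨⟨0, hzero⟩⟩
    have hp2 := (Fact.out : p.Prime).two_le
    rcases hdvd with ⟨k, hk⟩
    have hk0 : k ≠ 0 := by rintro rfl; omega
    have h1 : p ≤ p * k := Nat.le_mul_of_pos_right _ (Nat.pos_of_ne_zero hk0)
    omega
  obtain ⟨y, hy⟩ := Fintype.exists_ne_of_one_lt_card hcard2 ⟨0, hzero⟩
  have hyne : (y : ι → ZMod p) ≠ 0 := fun h => hy (Subtype.ext h)
  have key : ∀ i : Fin 3,
      ∑ j ∈ univ.filter (fun j => (y : ι → ZMod p) j ≠ 0), g i j = 0 := by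
    intro i
    have h2 : eval (y : ι → ZMod p) (olsonPoly p (g i)) = 0 := y.2 i
    rwa [olsonPoly_eval] at h2
  refine ⟨univ.filter (fun j => (y : ι → ZMod p) j ≠ 0), ?_, ?_, ?_, ?_⟩
  · obtain ⟨j, hj⟩ := Function.ne_iff.mp hyne
    exact ⟨j, by simpa using hj⟩
  · have := key 2
    simp only [hg, Matrix.cons_val_two, Matrix.tail_cons, Matrix.head_cons] at this
    simpa using this
  · have := key 0
    simpa only [hg, Matrix.cons_val_zero] using this
  · have := key 1
    simpa only [hg, Matrix.cons_val_one, Matrix.head_cons, Matrix.cons_val_zero] using this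


lemma lemB (hp2 : p ≠ 2) (heven : Even (Fintype.card ι))
    (hcard : 2 * (p - 1) < Fintype.card ι)
    (α β : ι → ZMod p) (hα : ∑ j, α j = 0) (hβ : ∑ j, β j = 0) :
    ∃ J : Finset ι, J.Nonempty ∧ J ≠ univ ∧
      ∑ j ∈ J, α j = 0 ∧ ∑ j ∈ J, β j = 0 := by
  have hp3 : 3 ≤ p := by
    have := (Fact.out : p.Prime).two_le
    omega
  set P : (ι → ZMod p) → Prop :=
    fun x => eval x (olsonPoly p α) = 0 ∧ eval x (olsonPoly p β) = 0 with hP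
  have hPdec : DecidablePred P := fun x => instDecidableAnd
  set S : Finset (ι → ZMod p) := univ.filter P with hS
  have hdvd : p ∣ S.card := by
    have hdeg : (olsonPoly p α).totalDegree + (olsonPoly p β).totalDegree
        < Fintype.card ι := by
      have h1 := olsonPoly_totalDegree (p := p) α
      have h2 := olsonPoly_totalDegree (p := p) β
      omega
    have h := char_dvd_card_solutions_of_add_lt p hdeg
    have h2 : Fintype.card { x : ι → ZMod p // P x } = S.card :=
      Fintype.card_subtype _
    rw [← h2]
    convert h using 2
  set Full : Finset (ι → ZMod p) := univ.filter (fun x => ∀ j, x j ≠ 0) with hFull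
  have hsub : Full ⊆ S := by
    intro x hx
    rw [hFull, Finset.mem_filter] at hx
    have hfull : univ.filter (fun j => x j ≠ 0) = univ := by
      ext j; simpa using hx.2 j
    rw [hS, Finset.mem_filter]
    refine ⟨Finset.mem_univ _, ?_, ?_⟩ <;> rw [olsonPoly_eval, hfull]
    · exact hα
    · exact hβ
  have hFullcard : Full.card = (p - 1) ^ Fintype.card ι := by
    have : Full = Fintype.piFinset (fun _ : ι => univ.filter (fun y : ZMod p => y ≠ 0)) := by
      ext x
      simp [hFull, Fintype.mem_piFinset]
    rw [this, Fintype.card_piFinset]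
    have hone : (univ.filter (fun y : ZMod p => y ≠ 0)) = univ.erase 0 := by
      ext y; simp [Finset.mem_erase]
    rw [Finset.prod_congr rfl (fun _ _ => by rw [hone])]
    rw [Finset.prod_const, Finset.card_univ]
    congr 1
    rw [Finset.card_erase_of_mem (Finset.mem_univ _), Finset.card_univ, ZMod.card]
  have h0S : (0 : ι → ZMod p) ∈ S := by
    rw [hS, Finset.mem_filter]
    refine ⟨Finset.mem_univ _, ?_, ?_⟩ <;> rw [olsonPoly_eval] <;> simp
  have h0F : (0 : ι → ZMod p) ∉ Full := by
    have hne : Nonempty ι := by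
      rw [← Fintype.card_pos_iff]
      omega
    obtain ⟨j⟩ := hne
    rw [hFull, Finset.mem_filter]
    push_neg
    intro _
    exact ⟨j, rfl⟩
  set T : Finset (ι → ZMod p) := (S \ Full).erase 0 with hT
  have h0sd : (0 : ι → ZMod p) ∈ S \ Full := Finset.mem_sdiff.mpr ⟨h0S, h0F⟩
  have hTcard : T.card + 1 + Full.card = S.card := by
    rw [hT, Finset.card_erase_of_mem h0sd, Finset.card_sdiff_of_subset hsub]
    have h1 : Full.card < S.card := by
      refine Finset.card_lt_card ?_
      exact ⟨hsub, fun hc => h0F (hc h0S)⟩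
    omega
  have hTzmod : ((T.card : ZMod p)) = -2 := by
    have := congrArg (fun n : ℕ => (n : ZMod p)) hTcard
    simp only [Nat.cast_add, Nat.cast_one] at this
    have hScast : ((S.card : ZMod p)) = 0 := by
      rcases hdvd with ⟨k, hk⟩
      simp [hk]
    have hFcast : ((Full.card : ZMod p)) = 1 := by
      rw [hFullcard]
      push_cast
      have : ((p - 1 : ℕ) : ZMod p) = -1 := by
        have : ((p - 1 : ℕ) : ZMod p) = (p : ZMod p) - 1 := by
          push_cast [Nat.cast_sub (by omega : 1 ≤ p)]
          ring
        rw [this, ZMod.natCast_self]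
        ring
      rw [this, heven.neg_one_pow]
    rw [hScast, hFcast] at this
    linear_combination this
  have hTne : T.Nonempty := by
    rw [Finset.nonempty_iff_ne_empty]
    intro hc
    rw [hc] at hTzmod
    simp only [Finset.card_empty, Nat.cast_zero] at hTzmod
    have h2 : ((2 : ℕ) : ZMod p) = 0 := by push_cast; linear_combination hTzmod
    rw [ZMod.natCast_eq_zero_iff] at h2
    exact hp2 ((Nat.prime_dvd_prime_iff_eq Fact.out Nat.prime_two).mp h2)
  obtain ⟨x, hx⟩ := hTne
  rw [hT, Finset.mem_erase, Finset.mem_sdiff] at hx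
  obtain ⟨hx0, hxS, hxF⟩ := hx
  refine ⟨univ.filter (fun j => x j ≠ 0), ?_, ?_, ?_, ?_⟩
  · obtain ⟨j, hj⟩ := Function.ne_iff.mp hx0
    exact ⟨j, by simpa using hj⟩
  · intro hc
    apply hxF
    rw [hFull, Finset.mem_filter]
    refine ⟨Finset.mem_univ _, fun j => ?_⟩
    have : j ∈ univ.filter (fun j => x j ≠ 0) := by rw [hc]; exact Finset.mem_univ j
    simpa using this
  · rw [hS, Finset.mem_filter] at hxS
    have := hxS.2.1
    rwa [olsonPoly_eval] at this
  · rw [hS, Finset.mem_filter] at hxS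
    have := hxS.2.2
    rwa [olsonPoly_eval] at this

end lemAB

lemma int_dvd_iff (p : ℕ) {n : ℕ} (a : Fin n → ℤ) (J : Finset (Fin n)) :
    (p : ℤ) ∣ ∑ j ∈ J, a j ↔ ∑ j ∈ J, ((a j : ZMod p)) = 0 := by
  rw [← ZMod.intCast_zmod_eq_zero_iff_dvd]
  push_cast
  rfl

theorem stmt_2 (p s : ℕ) (hp : p.Prime) (hs : 3 * p - 2 ≤ s)
    (a b : Fin s → ℤ) :
    ∃ J : Finset (Fin s), J.Nonempty ∧ J.card ≤ p ∧
      (p : ℤ) ∣ ∑ j ∈ J, a j ∧ (p : ℤ) ∣ ∑ j ∈ J, b j := by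
  haveI : Fact p.Prime := ⟨hp⟩
  classical
  set α : Fin s → ZMod p := fun j => ((a j : ZMod p)) with hα
  set β : Fin s → ZMod p := fun j => ((b j : ZMod p)) with hβ
  by_cases hp2 : p = 2
  · -- p = 2
    subst hp2
    have hs4 : 4 ≤ s := by omega
    by_cases hex : ∃ j, α j = 0 ∧ β j = 0
    · obtain ⟨j, hj1, hj2⟩ := hex
      refine ⟨{j}, Finset.singleton_nonempty j, by simp, ?_, ?_⟩ <;>
        rw [int_dvd_iff] <;> simpa
    · push_neg at hex
      set f : Fin s → ZMod 2 × ZMod 2 := fun j => (α j, β j) with hf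
      have hne : ∀ j, f j ≠ (0 : ZMod 2 × ZMod 2) := by
        intro j hc
        rw [Prod.ext_iff] at hc
        exact hex j hc.1 hc.2
      set f' : Fin s → {v : ZMod 2 × ZMod 2 // v ≠ 0} := fun j => ⟨f j, hne j⟩ with hf'
      have hcard : Fintype.card {v : ZMod 2 × ZMod 2 // v ≠ 0} < Fintype.card (Fin s) := by
        have h1 : Fintype.card {v : ZMod 2 × ZMod 2 // v ≠ 0} = 3 := by
          simp [Fintype.card_subtype_compl, Fintype.card_subtype_eq]
        rw [h1, Fintype.card_fin]
        omega
      obtain ⟨i, j, hij, hfij⟩ := Fintype.exists_ne_map_eq_of_card_lt f' hcard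
      have hfeq : f i = f j := congrArg Subtype.val hfij
      rw [Prod.ext_iff] at hfeq
      refine ⟨{i, j}, ⟨i, by simp⟩, ?_, ?_, ?_⟩
      · rw [Finset.card_pair hij]
      · rw [int_dvd_iff, Finset.sum_pair hij]
        show α i + α j = 0
        have e1 : α i = α j := hfeq.1
        rw [e1]
        exact CharTwo.add_self_eq_zero _
      · rw [int_dvd_iff, Finset.sum_pair hij]
        show β i + β j = 0
        have e2 : β i = β j := hfeq.2
        rw [e2]
        exact CharTwo.add_self_eq_zero _
  · -- p odd
    have hp3 : 3 ≤ p := by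
      have := hp.two_le
      rcases Nat.lt_or_ge p 3 with h | h
      · interval_cases p
        · exact absurd rfl hp2
      · exact h
    obtain ⟨T, -, hTcard⟩ := Finset.exists_subset_card_eq
      (s := (univ : Finset (Fin s))) (n := 3 * p - 2)
      (by rw [Finset.card_univ, Fintype.card_fin]; exact hs)
    have hTc : Fintype.card ↥T = 3 * p - 2 := by rw [Fintype.card_coe]; exact hTcard
    have hcard3 : 3 * (p - 1) < Fintype.card ↥T := by rw [hTc]; omega
    obtain ⟨J1, hJ1ne, hJ1card, hJ1a, hJ1b⟩ :=
      lemA hcard3 (fun j => α j.1) (fun j => β j.1)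
    have hdvdJ1 : p ∣ J1.card := (ZMod.natCast_eq_zero_iff _ _).mp hJ1card
    have hJ1le : J1.card ≤ 3 * p - 2 := by
      have h := Finset.card_le_univ J1
      omega

    set J2 : Finset (Fin s) := J1.map (Function.Embedding.subtype _) with hJ2
    have hJ2card : J2.card = J1.card := Finset.card_map _
    have hJ2a : ∑ j ∈ J2, α j = 0 := by
      rw [hJ2, Finset.sum_map]
      simpa using hJ1a
    have hJ2b : ∑ j ∈ J2, β j = 0 := by
      rw [hJ2, Finset.sum_map]
      simpa using hJ1b
    by_cases hle : J1.card ≤ p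
    · refine ⟨J2, hJ1ne.map, by omega, ?_, ?_⟩
      · exact (int_dvd_iff p a J2).mpr hJ2a
      · exact (int_dvd_iff p b J2).mpr hJ2b
    · push_neg at hle
      have hJ1eq : J1.card = 2 * p := by
        rcases hdvdJ1 with ⟨k, hk⟩
        have hk3 : k < 3 := by
          by_contra h
          push_neg at h
          have : p * 3 ≤ p * k := Nat.mul_le_mul_left p h
          omega
        interval_cases k <;> omega
      have hJ2c : J2.card = 2 * p := by omega
      have heven : Even (Fintype.card ↥J2) := by
        rw [Fintype.card_coe, hJ2c]
        exact even_two_mul p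
      have hcardB : 2 * (p - 1) < Fintype.card ↥J2 := by
        rw [Fintype.card_coe, hJ2c]
        omega
      have hsa : ∑ j : ↥J2, α j.1 = 0 := by
        rw [Finset.sum_coe_sort J2 α]
        exact hJ2a
      have hsb : ∑ j : ↥J2, β j.1 = 0 := by
        rw [Finset.sum_coe_sort J2 β]
        exact hJ2b
      obtain ⟨J3, hJ3ne, hJ3univ, hJ3a, hJ3b⟩ := lemB hp2 heven hcardB _ _ hsa hsb
      set J4 : Finset (Fin s) := J3.map (Function.Embedding.subtype _) with hJ4
      have hJ4card : J4.card = J3.card := Finset.card_map _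
      have hJ4sub : J4 ⊆ J2 := by
        intro x hx
        rw [hJ4, Finset.mem_map] at hx
        obtain ⟨y, -, rfl⟩ := hx
        exact y.2
      have hJ4a : ∑ j ∈ J4, α j = 0 := by
        rw [hJ4, Finset.sum_map]
        simpa using hJ3a
      have hJ4b : ∑ j ∈ J4, β j = 0 := by
        rw [hJ4, Finset.sum_map]
        simpa using hJ3b
      have hJ3lt : J3.card < 2 * p := by
        have hss : J3 ⊂ univ := Finset.ssubset_univ_iff.mpr hJ3univ
        have := Finset.card_lt_card hss
        rwa [Finset.card_univ, Fintype.card_coe, hJ2c] at this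
      by_cases h4 : J3.card ≤ p
      · refine ⟨J4, hJ3ne.map, by omega, ?_, ?_⟩
        · exact (int_dvd_iff p a J4).mpr hJ4a
        · exact (int_dvd_iff p b J4).mpr hJ4b
      · push_neg at h4
        have hsd := Finset.card_sdiff_of_subset hJ4sub
        have hJ3pos : 0 < J3.card := Finset.card_pos.mpr hJ3ne
        refine ⟨J2 \ J4, Finset.card_pos.mp (by omega), by omega, ?_, ?_⟩
        · rw [int_dvd_iff]
          have := Finset.sum_sdiff (f := α) hJ4sub
          have h0 : ∑ j ∈ J2 \ J4, α j = 0 := by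
            rw [hJ4a] at this
            simpa [hJ2a] using this
          exact h0
        · rw [int_dvd_iff]
          have := Finset.sum_sdiff (f := β) hJ4sub
          have h0 : ∑ j ∈ J2 \ J4, β j = 0 := by
            rw [hJ4b] at this
            simpa [hJ2b] using this
          exact h0
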